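/- Let X be a compact metric space, (x_i) a sequence of points of X, (p_i) a fast growing sequence, and z = z((p_i),(x_i)) the Oxtoby sequence. Suppose L((x_i)) contains at least two points and let x ∈ O̅(z) be a Toeplitz sequence. Then the following are equivalent: (1) x = S^m z for some m ∈ ℤ; (2) there is a conjugacy f from (O̅(z),S) to itself such that f(x) = x^{-1}, where x^{-1} ∈ X^ℤ is defined by x^{-1}(n) = x(−n). -/

import Mathlib

open Filter Topology

section Defs

variable {X : Type*}

/-- The shift by `m`: `(shiftZ m z) n = z (n + m)`, so `shiftZ 1` is the left shift `S`
and `shiftZ m = S^m`. -/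
def shiftZ (m : ℤ) (z : ℤ → X) : ℤ → X := fun n => z (n + m)

/-- `Per_p(z)`: the set of positions `n` such that `z m = z n` for all `m ≡ n (mod p)`. -/
def PerSet (p : ℕ) (z : ℤ → X) : Set ℤ :=
  {n : ℤ | ∀ m : ℤ, (p : ℤ) ∣ m - n → z m = z n}

/-- `Per(z) = ⋃_{p ≥ 1} Per_p(z)`. -/
def PerFull (z : ℤ → X) : Set ℤ := {n : ℤ | ∃ p : ℕ, 1 ≤ p ∧ n ∈ PerSet p z}

/-- A Toeplitz sequence: every position is periodic. -/
def IsToeplitz (z : ℤ → X) : Prop := ∀ n : ℤ, n ∈ PerFull z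

/-- A non-periodic sequence: `S^m z ≠ z` for all `m ≠ 0`. -/
def NonPeriodicSeq (z : ℤ → X) : Prop := ∀ m : ℤ, m ≠ 0 → shiftZ m z ≠ z

/-- `u` and `v` have the same `p`-skeleton. -/
def SamePSkeleton (p : ℕ) (u v : ℤ → X) : Prop :=
  PerSet p u = PerSet p v ∧ ∀ n ∈ PerSet p u, u n = v n

/-- A period structure of a (non-periodic) Toeplitz sequence `z`. -/
def IsPeriodStructure (p : ℕ → ℕ) (z : ℤ → X) : Prop :=
  (∀ i, 1 ≤ p i) ∧
  (∀ i q, 1 ≤ q → q < p i → PerSet q z ≠ PerSet (p i) z) ∧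
  (∀ i, p i ∣ p (i + 1)) ∧
  (∀ n : ℤ, ∃ i, n ∈ PerSet (p i) z)

/-- A fast growing sequence of positive integers. -/
def FastGrowing (p : ℕ → ℕ) : Prop :=
  p 0 = 1 ∧ (∀ i, p i ∣ p (i + 1)) ∧ 3 ≤ p 1 ∧ ∀ i, 3 * p i ≤ p (i + 1)

/-- `oxDefined p i` is the set of positions of the Oxtoby sequence that are filled in
after step `i` of the inductive construction (step `i+1` fills, for each `k ≡ 0` or
`-1 (mod p_{i+1}/p_i)`, the still-empty positions `J(i,k)` of the block
`[k p_i, (k+1) p_i)`). -/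
def oxDefined (p : ℕ → ℕ) : ℕ → Set ℤ
  | 0 => ∅
  | i + 1 =>
      oxDefined p i ∪
        {n : ℤ | ∃ k : ℤ,
          (((p (i + 1) / p i : ℕ) : ℤ) ∣ k ∨ ((p (i + 1) / p i : ℕ) : ℤ) ∣ (k + 1)) ∧
          k * (p i : ℤ) ≤ n ∧ n < (k + 1) * (p i : ℤ) ∧ n ∉ oxDefined p i}

/-- `J(i,k)`: the set of positions in `[k p_i, (k+1) p_i)` still undefined after step `i`. -/
def oxJ (p : ℕ → ℕ) (i : ℕ) (k : ℤ) : Set ℤ :=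
  {n : ℤ | k * (p i : ℤ) ≤ n ∧ n < (k + 1) * (p i : ℤ) ∧ n ∉ oxDefined p i}

/-- The Oxtoby sequence `z((p_i),(x_i))`: position `n` receives the value `x_i` where `i`
is the first step after which `n` is defined. -/
noncomputable def oxtoby (p : ℕ → ℕ) (x : ℕ → X) : ℤ → X :=
  fun n => x (sInf {i : ℕ | n ∈ oxDefined p i})

/-- The reverse of a bi-infinite sequence: `x⁻¹(n) = x(-n)`. -/
def revSeq (z : ℤ → X) : ℤ → X := fun n => z (-n)

/-- `[n0, n1]` is a maximal `p`-periodic block in `x`. -/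
def IsMaxPeriodicBlock (p : ℕ) (x : ℤ → X) (n0 n1 : ℤ) : Prop :=
  n0 ≤ n1 ∧ Set.Icc n0 n1 ⊆ PerSet p x ∧
    ∀ n0' n1' : ℤ, n0' ≤ n0 → n1 ≤ n1' → Set.Icc n0' n1' ⊆ PerSet p x →
      n0' = n0 ∧ n1' = n1

variable [TopologicalSpace X]

/-- The orbit closure of `z` in `X^ℤ` with the product topology. -/
def orbitClosure (z : ℤ → X) : Set (ℤ → X) :=
  closure {y : ℤ → X | ∃ m : ℤ, y = shiftZ m z}

/-- The ω-limit set of a sequence: all limits of convergent subsequences. -/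
def omegaLimitSet (x : ℕ → X) : Set X :=
  {a : X | ∃ φ : ℕ → ℕ, StrictMono φ ∧ Tendsto (x ∘ φ) atTop (𝓝 a)}

/-- Two sequences have the same topological type if exactly the same subsequences
converge. -/
def SameTopType {Y : Type*} [TopologicalSpace Y] (x : ℕ → X) (y : ℕ → Y) : Prop :=
  ∀ φ : ℕ → ℕ, StrictMono φ →
    ((∃ a, Tendsto (x ∘ φ) atTop (𝓝 a)) ↔ (∃ a, Tendsto (y ∘ φ) atTop (𝓝 a)))

/-- `f` is a conjugacy between the shift-invariant sets `A` and `B`: a homeomorphism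
from `A` onto `B` commuting with the shift. -/
def IsConjugacy (A B : Set (ℤ → X)) (f : (ℤ → X) → (ℤ → X)) : Prop :=
  Set.MapsTo f A B ∧ ContinuousOn f A ∧
    (∃ g : (ℤ → X) → (ℤ → X), Set.MapsTo g B A ∧ ContinuousOn g B ∧
      (∀ a ∈ A, g (f a) = a) ∧ (∀ b ∈ B, f (g b) = b)) ∧
    ∀ a ∈ A, f (shiftZ 1 a) = shiftZ 1 (f a)

/-- The `m`-th iterate (for `m : ℤ`) of a self-homeomorphism. -/
def iterZ {Y : Type*} [TopologicalSpace Y] (f : Y ≃ₜ Y) (m : ℤ) (a : Y) : Y :=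
  ((f.toEquiv ^ m : Equiv.Perm Y)) a

end Defs

namespace OxProof

variable {p : ℕ → ℕ}

/-- `P p i` : the period `p i` as an integer. -/
def P (p : ℕ → ℕ) (i : ℕ) : ℤ := (p i : ℤ)

lemma P_pos (hp : FastGrowing p) (i : ℕ) : 0 < P p i := by
  induction i with
  | zero => simp [P, hp.1]
  | succ n ih =>
      have h := hp.2.2.2 n
      have h' : ((3 * p n : ℕ) : ℤ) ≤ ((p (n+1) : ℕ) : ℤ) := by exact_mod_cast h
      push_cast at h'
      unfold P at *; omega

lemma P_zero (hp : FastGrowing p) : P p 0 = 1 := by simp [P, hp.1]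

lemma P_grow (hp : FastGrowing p) (i : ℕ) : 3 * P p i ≤ P p (i+1) := by
  have h := hp.2.2.2 i
  unfold P; exact_mod_cast h

lemma P_dvd_succ (hp : FastGrowing p) (i : ℕ) : P p i ∣ P p (i+1) := by
  unfold P; exact_mod_cast hp.2.1 i

lemma P_dvd (hp : FastGrowing p) {i j : ℕ} (h : i ≤ j) : P p i ∣ P p j := by
  induction j with
  | zero => simp_all
  | succ n ih =>
      rcases Nat.lt_or_ge i (n+1) with h'|h'
      · exact dvd_trans (ih (by omega)) (P_dvd_succ hp n)
      · have : i = n+1 := by omega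
        subst this; rfl

lemma P_mono (hp : FastGrowing p) {i j : ℕ} (h : i ≤ j) : P p i ≤ P p j := by
  induction j with
  | zero => simp_all
  | succ n ih =>
      rcases Nat.lt_or_ge i (n+1) with h'|h'
      · have := P_grow hp n
        have := ih (by omega)
        have := P_pos hp n
        omega
      · have : i = n+1 := by omega
        subst this; rfl

lemma P_big (hp : FastGrowing p) (i : ℕ) : (i : ℤ) + 1 ≤ P p i := by
  induction i with
  | zero => simp [P_zero hp]
  | succ n ih =>
      have := P_grow hp n
      have := P_pos hp n
      push_cast
      omega

/-- `E p j = p 0 + ... + p (j-1)`, the half-length of the central run of `D_j`. -/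
def E (p : ℕ → ℕ) (j : ℕ) : ℤ := ∑ l ∈ Finset.range j, P p l

lemma E_zero : E p 0 = 0 := by simp [E]

lemma E_succ (j : ℕ) : E p (j+1) = E p j + P p j := Finset.sum_range_succ _ _

lemma E_one (hp : FastGrowing p) : E p 1 = 1 := by
  simp [E_succ, E_zero, P_zero hp]

lemma E_nonneg (hp : FastGrowing p) (j : ℕ) : 0 ≤ E p j := by
  apply Finset.sum_nonneg
  intro l _
  exact le_of_lt (P_pos hp l)

lemma E_pos (hp : FastGrowing p) (j : ℕ) : 0 < E p (j+1) := by
  rw [E_succ]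
  have h1 := E_nonneg hp j
  have h2 := P_pos hp j
  omega

lemma E_lb (hp : FastGrowing p) (j : ℕ) : P p j ≤ E p (j+1) := by
  rw [E_succ]
  have := E_nonneg hp j
  omega

lemma E_ub (hp : FastGrowing p) (j : ℕ) : 2 * E p (j+1) ≤ 3 * P p j := by
  induction j with
  | zero => rw [E_one hp, P_zero hp]; omega
  | succ n ih =>
      rw [E_succ]
      have := P_grow hp n
      have := P_grow hp (n+1)
      have := P_pos hp n
      omega

/-- `E (j+1) ≤ P (j+1) - P j - 1` : the key location of E strictly inside the gap. -/
lemma E_gap (hp : FastGrowing p) (j : ℕ) : E p (j+1) ≤ P p (j+1) - P p j - 1 := by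
  have h1 := E_ub hp j
  have h2 := P_grow hp j
  have h3 := P_pos hp j
  rcases Nat.eq_zero_or_pos j with h|h
  · subst h
    rw [E_one hp, P_zero hp] at *
    omega
  · obtain ⟨n, rfl⟩ := Nat.exists_eq_succ_of_ne_zero (by omega : j ≠ 0)
    have h4 := P_grow hp n
    have h5 := P_pos hp n
    omega

lemma E_mono (hp : FastGrowing p) {a b : ℕ} (h : a ≤ b) : E p a ≤ E p b := by
  induction b, h using Nat.le_induction with
  | base => exact le_refl _
  | succ b hab ih =>
      rw [E_succ]
      have := P_pos hp b
      omega

/-- membership in the level-`(l+1)` core, via residues: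
positions within `P l` of a multiple of `P (l+1)`. -/
def InCore (p : ℕ → ℕ) (l : ℕ) (n : ℤ) : Prop :=
  n % P p (l+1) < P p l ∨ P p (l+1) - P p l ≤ n % P p (l+1)

/-- the set of positions defined after step `i`. -/
def InD (p : ℕ → ℕ) (i : ℕ) (n : ℤ) : Prop := ∃ l, l + 1 ≤ i ∧ InCore p l n

lemma InCore_congr (hp : FastGrowing p) {l : ℕ} {n n' : ℤ} (h : P p (l+1) ∣ n' - n) :
    InCore p l n ↔ InCore p l n' := by
  have : n' % P p (l+1) = n % P p (l+1) := Int.ModEq.symm (Int.modEq_iff_dvd.2 (by simpa using h))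
  unfold InCore; rw [this]

lemma InD_congr (hp : FastGrowing p) {i : ℕ} {n n' : ℤ} (h : P p i ∣ n' - n) :
    InD p i n ↔ InD p i n' := by
  unfold InD
  constructor <;> rintro ⟨l, hl, hc⟩ <;> refine ⟨l, hl, ?_⟩
  · exact (InCore_congr hp (dvd_trans (P_dvd hp hl) h)).1 hc
  · exact (InCore_congr hp (dvd_trans (P_dvd hp hl) h)).2 hc

lemma InD_mono (hp : FastGrowing p) {i i' : ℕ} (h : i ≤ i') {n : ℤ} (hn : InD p i n) :
    InD p i' n := by
  obtain ⟨l, hl, hc⟩ := hn; exact ⟨l, by omega, hc⟩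

/-- generic window/residue characterization. -/
lemma window_iff_mod {a b : ℤ} (ha : 1 ≤ a) (hb : 3*a ≤ b) (n : ℤ) :
    (∃ k : ℤ, k * b - a ≤ n ∧ n < k * b + a) ↔ (n % b < a ∨ b - a ≤ n % b) := by
  have hbpos : 0 < b := by omega
  have hm1 : 0 ≤ n % b := Int.emod_nonneg n (by omega)
  have hm2 : n % b < b := Int.emod_lt_of_pos n hbpos
  have hdiv : b * (n / b) + n % b = n := Int.mul_ediv_add_emod n b
  constructor
  · rintro ⟨k, h1, h2⟩
    obtain ⟨d, hk⟩ : ∃ d, k = n / b + d := ⟨k - n / b, by ring⟩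
    have hdb : k * b = b * (n / b) + d * b := by rw [hk]; ring
    rcases lt_trichotomy d 0 with hd0 | hd0 | hd0
    · exfalso
      have hle : d * b ≤ (-1) * b := mul_le_mul_of_nonneg_right (by omega) (by omega)
      have hno : (-1 : ℤ) * b = -b := by ring
      omega
    · have h0 : d * b = 0 := by rw [hd0, zero_mul]
      left; omega
    · rcases (by omega : d = 1 ∨ 2 ≤ d) with hd1 | hd2
      · have h0 : d * b = 1 * b := by rw [hd1]
        have h0' : (1:ℤ) * b = b := one_mul b
        right; omega
      · exfalso
        have h3 : 2 * b ≤ d * b := mul_le_mul_of_nonneg_right (by omega) (by omega)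
        omega
  · intro h
    rcases h with h | h
    · refine ⟨n / b, ?_, ?_⟩ <;>
      · have hc : (n/b)*b = b*(n/b) := mul_comm _ _
        omega
    · refine ⟨n / b + 1, ?_, ?_⟩ <;>
      · have hc : (n/b+1)*b = b*(n/b) + b := by ring
        omega

lemma InCore_iff_window (hp : FastGrowing p) (l : ℕ) (n : ℤ) :
    InCore p l n ↔ ∃ k : ℤ, k * P p (l+1) - P p l ≤ n ∧ n < k * P p (l+1) + P p l := by
  unfold InCore
  rw [window_iff_mod (P_pos hp l) (P_grow hp l) n]


lemma emod_self_range {b r : ℤ} (hb : 0 < b) (h1 : 0 ≤ r) (h2 : r < b) : r % b = r :=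
  Int.emod_eq_of_lt h1 h2

lemma emod_shift (b r : ℤ) (c : ℤ) : (r + b * c) % b = r % b :=
  Int.add_mul_emod_self_left (a := r) (b := b) (c := c)

/-- if `-P l ≤ n < P l`, then `n` is in the level-`l` core. -/
lemma InCore_small (hp : FastGrowing p) {l : ℕ} {n : ℤ} (h1 : -(P p l) ≤ n) (h2 : n < P p l) :
    InCore p l n := by
  have hPl := P_pos hp l
  have hPs := P_pos hp (l+1)
  have hg := P_grow hp l
  unfold InCore
  rcases le_or_gt 0 n with h | h
  · left
    rw [emod_self_range hPs h (by omega)]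
    omega
  · right
    have e : n % P p (l+1) = n + P p (l+1) := by
      have := emod_shift (P p (l+1)) n 1
      simp only [mul_one] at this
      rw [← this, emod_self_range hPs (by omega) (by omega)]
    omega

lemma exists_cover (hp : FastGrowing p) (n : ℤ) : ∃ l : ℕ, InCore p l n := by
  refine ⟨n.natAbs, InCore_small hp ?_ ?_⟩ <;>
  · have h := P_big hp n.natAbs
    have : (n.natAbs : ℤ) = |n| := Int.abs_eq_natAbs n |>.symm
    cases' abs_cases n with hc hc <;> omega

/-- `oxDefined` agrees with the explicit description `InD`. -/
lemma oxDefined_eq (hp : FastGrowing p) (i : ℕ) (n : ℤ) :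
    n ∈ oxDefined p i ↔ InD p i n := by
  induction i generalizing n with
  | zero =>
      simp only [oxDefined, Set.mem_empty_iff_false, false_iff]
      rintro ⟨l, hl, _⟩; omega
  | succ i ih =>
      have hQ : ((p (i + 1) / p i : ℕ) : ℤ) * (p i : ℤ) = (p (i+1) : ℤ) := by
        have := Nat.div_mul_cancel (hp.2.1 i)
        exact_mod_cast this
      set Q := ((p (i + 1) / p i : ℕ) : ℤ) with hQdef
      have hPipos : (0:ℤ) < (p i : ℤ) := P_pos hp i
      have hnew : (∃ k : ℤ, (Q ∣ k ∨ Q ∣ (k + 1)) ∧ k * (p i : ℤ) ≤ n ∧ n < (k + 1) * (p i : ℤ))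
          ↔ InCore p i n := by
        rw [InCore_iff_window hp]
        unfold P
        constructor
        · rintro ⟨k, hk | hk, h1, h2⟩
          · obtain ⟨m, rfl⟩ := hk
            refine ⟨m, ?_, ?_⟩
            · have e : Q * m * (p i : ℤ) = m * (Q * (p i : ℤ)) := by ring
              rw [hQ] at e
              omega
            · have e : (Q * m + 1) * (p i : ℤ) = m * (Q * (p i : ℤ)) + (p i : ℤ) := by ring
              rw [hQ] at e
              omega
          · obtain ⟨m, hm⟩ := hk
            have hk' : k = Q * m - 1 := by omega
            subst hk'
            refine ⟨m, ?_, ?_⟩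
            · have e : (Q * m - 1) * (p i : ℤ) = m * (Q * (p i : ℤ)) - (p i : ℤ) := by ring
              rw [hQ] at e
              omega
            · have e : (Q * m - 1 + 1) * (p i : ℤ) = m * (Q * (p i : ℤ)) := by ring
              rw [hQ] at e
              omega
        · rintro ⟨K, w1, w2⟩
          rcases lt_or_ge n (K * (p (i+1) : ℤ)) with h | h
          · refine ⟨K * Q - 1, Or.inr ⟨K, by ring⟩, ?_, ?_⟩
            · have e : (K * Q - 1) * (p i : ℤ) = K * (Q * (p i : ℤ)) - (p i : ℤ) := by ring
              rw [hQ] at e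
              omega
            · have e : (K * Q - 1 + 1) * (p i : ℤ) = K * (Q * (p i : ℤ)) := by ring
              rw [hQ] at e
              omega
          · refine ⟨K * Q, Or.inl ⟨K, by ring⟩, ?_, ?_⟩
            · have e : K * Q * (p i : ℤ) = K * (Q * (p i : ℤ)) := by ring
              rw [hQ] at e
              omega
            · have e : (K * Q + 1) * (p i : ℤ) = K * (Q * (p i : ℤ)) + (p i : ℤ) := by ring
              rw [hQ] at e
              omega
      constructor
      · intro hmem
        rcases hmem with hmem | hmem
        · exact InD_mono hp (by omega) ((ih n).1 hmem)
        · obtain ⟨k, hk, h1, h2, _⟩ := hmem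
          exact ⟨i, le_refl _, hnew.1 ⟨k, hk, h1, h2⟩⟩
      · rintro ⟨l, hl, hc⟩
        rcases Nat.lt_or_ge (l+1) (i+1) with h | h
        · exact Or.inl ((ih n).2 ⟨l, by omega, hc⟩)
        · have hli : l = i := by omega
          by_cases hD : n ∈ oxDefined p i
          · exact Or.inl hD
          · right
            obtain ⟨k, hk, h1, h2⟩ := hnew.2 (hli ▸ hc)
            exact ⟨k, hk, h1, h2, hD⟩

lemma E_mod (hp : FastGrowing p) {l m : ℕ} (h : l + 1 ≤ m) :
    P p (l+1) ∣ E p m - E p (l+1) := by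
  induction m with
  | zero => omega
  | succ m ih =>
      rcases Nat.lt_or_ge (l+1) (m+1) with h' | h'
      · have hm : l + 1 ≤ m := by omega
        have : E p (m+1) - E p (l+1) = (E p m - E p (l+1)) + P p m := by
          rw [E_succ]; ring
        rw [this]
        exact dvd_add (ih hm) (P_dvd hp (by omega))
      · have : l + 1 = m + 1 := by omega
        rw [this]; simp

/-- the point `E m` is never in a core of level `≤ m`. -/
lemma E_not_inCore (hp : FastGrowing p) {l m : ℕ} (h : l + 1 ≤ m) :
    ¬ InCore p l (E p m) := by
  have hcongr := (InCore_congr hp (l := l) (n := E p (l+1)) (n' := E p m) (E_mod hp h))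
  rw [← hcongr]
  unfold InCore
  have hlb := E_lb hp l
  have hgap := E_gap hp l
  have hnn := E_nonneg hp (l+1)
  have hPs := P_pos hp (l+1)
  have hPl := P_pos hp l
  rw [emod_self_range hPs (by omega) (by omega)]
  omega

/-- the point `-1 - E m` is never in a core of level `≤ m`. -/
lemma E_neg_not_inCore (hp : FastGrowing p) {l m : ℕ} (h : l + 1 ≤ m) :
    ¬ InCore p l (-1 - E p m) := by
  have hd : P p (l+1) ∣ (-1 - E p (l+1)) - (-1 - E p m) := by
    have : (-1 - E p (l+1)) - (-1 - E p m) = E p m - E p (l+1) := by ring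
    rw [this]; exact E_mod hp h
  have hcongr := (InCore_congr hp (l := l) (n := -1 - E p m) (n' := -1 - E p (l+1)) hd)
  rw [hcongr]
  unfold InCore
  have hlb := E_lb hp l
  have hgap := E_gap hp l
  have hnn := E_nonneg hp (l+1)
  have hPs := P_pos hp (l+1)
  have hPl := P_pos hp l
  have e : (-1 - E p (l+1)) % P p (l+1) = P p (l+1) - 1 - E p (l+1) := by
    have h2 := emod_shift (P p (l+1)) (P p (l+1) - 1 - E p (l+1)) (-1)
    have e2 : P p (l+1) - 1 - E p (l+1) + P p (l+1) * (-1) = -1 - E p (l+1) := by ring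
    rw [e2] at h2
    rw [h2]
    exact emod_self_range hPs (by omega) (by omega)
  rw [e]
  omega

lemma notInD_E (hp : FastGrowing p) {m : ℕ} {v : ℤ} (hv : P p m ∣ v) :
    ¬ InD p m (v + E p m) := by
  rintro ⟨l, hl, hc⟩
  have hd : P p (l+1) ∣ (E p m) - (v + E p m) := by
    have : (E p m) - (v + E p m) = -v := by ring
    rw [this]
    exact Dvd.dvd.neg_right (dvd_trans (P_dvd hp hl) hv)
  exact E_not_inCore hp hl ((InCore_congr hp hd).1 hc)

lemma notInD_E_neg (hp : FastGrowing p) {m : ℕ} {v : ℤ} (hv : P p m ∣ v) :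
    ¬ InD p m (v + (-1 - E p m)) := by
  rintro ⟨l, hl, hc⟩
  have hd : P p (l+1) ∣ (-1 - E p m) - (v + (-1 - E p m)) := by
    have : (-1 - E p m) - (v + (-1 - E p m)) = -v := by ring
    rw [this]
    exact Dvd.dvd.neg_right (dvd_trans (P_dvd hp hl) hv)
  exact E_neg_not_inCore hp hl ((InCore_congr hp hd).1 hc)

/-- core membership near any multiple of the period. -/
lemma InCore_near (hp : FastGrowing p) {l : ℕ} {v w : ℤ} (hv : P p (l+1) ∣ v)
    (h1 : -(P p l) ≤ w) (h2 : w < P p l) : InCore p l (v + w) := by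
  have hd : P p (l+1) ∣ w - (v + w) := by
    have : w - (v + w) = -v := by ring
    rw [this]; exact Dvd.dvd.neg_right hv
  exact (InCore_congr hp hd).2 (InCore_small hp h1 h2)

/-- the central run: any point within `E (j+1)` of a multiple of `P (j+1)` is defined
at step `j+1`. -/
lemma run_subset (hp : FastGrowing p) :
    ∀ (j : ℕ) (v w : ℤ), P p (j+1) ∣ v → -(E p (j+1)) ≤ w → w ≤ E p (j+1) - 1 →
      InD p (j+1) (v + w) := by
  intro j
  induction j with
  | zero =>
      intro v w hv h1 h2
      rw [E_one hp] at h1 h2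
      refine ⟨0, le_refl _, InCore_near hp hv ?_ ?_⟩ <;>
      · rw [P_zero hp]; omega
  | succ j ih =>
      intro v w hv h1 h2
      have hE : E p (j+1+1) = E p (j+1) + P p (j+1) := E_succ _
      rcases le_or_gt (P p (j+1)) w with hw | hw
      · have h := ih (v + P p (j+1)) (w - P p (j+1))
          (dvd_add (dvd_trans (P_dvd_succ hp (j+1)) hv) dvd_rfl)
          (by have := E_pos hp j; omega) (by omega)
        have e : v + P p (j+1) + (w - P p (j+1)) = v + w := by ring
        rw [e] at h
        exact InD_mono hp (by omega) h
      · rcases le_or_gt (-(P p (j+1))) w with hw2 | hw2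
        · exact ⟨j+1, le_refl _, InCore_near hp hv hw2 hw⟩
        · have h := ih (v - P p (j+1)) (w + P p (j+1))
            (dvd_sub (dvd_trans (P_dvd_succ hp (j+1)) hv) dvd_rfl)
            (by omega) (by have := E_pos hp j; omega)
          have e : v - P p (j+1) + (w + P p (j+1)) = v + w := by ring
          rw [e] at h
          exact InD_mono hp (by omega) h

/-- any interval inside the defined set `D_i` lies in a single run. -/
lemma interval_in_run (hp : FastGrowing p) :
    ∀ (i : ℕ) (a b : ℤ), a ≤ b → (∀ n : ℤ, a ≤ n → n ≤ b → InD p i n) →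
      ∃ (l : ℕ) (v : ℤ), l + 1 ≤ i ∧ P p (l+1) ∣ v ∧ v - E p (l+1) ≤ a ∧ b ≤ v + E p (l+1) - 1 := by
  intro i
  induction i with
  | zero =>
      intro a b hab hsub
      exact absurd (hsub a (le_refl _) hab) (by rintro ⟨l, hl, _⟩; omega)
  | succ i ih =>
      intro a b hab hsub
      by_cases hall : ∀ n : ℤ, a ≤ n → n ≤ b → InD p i n
      · obtain ⟨l, v, hl, h⟩ := ih a b hab hall
        exact ⟨l, v, by omega, h⟩
      · push_neg at hall
        obtain ⟨w, hw1, hw2, hw3⟩ := hall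
        obtain ⟨l, hl, hc⟩ := hsub w hw1 hw2
        have hli : l = i := by
          rcases Nat.lt_or_ge (l+1) (i+1) with h | h
          · exact absurd ⟨l, by omega, hc⟩ hw3
          · omega
        subst hli
        obtain ⟨k, hk1, hk2⟩ := (InCore_iff_window hp l w).1 hc
        set v := k * P p (l+1) with hvdef
        have hv : P p (l+1) ∣ v := ⟨k, mul_comm _ _⟩
        have hElb := E_lb hp l
        have hEpos := E_pos hp l
        refine ⟨l, v, le_refl _, hv, ?_, ?_⟩
        · by_contra hcon
          push_neg at hcon
          have hq : a ≤ v + (-1 - E p (l+1)) := by omega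
          have hq2 : v + (-1 - E p (l+1)) ≤ b := by omega
          exact notInD_E_neg hp hv (hsub _ hq hq2)
        · by_contra hcon
          push_neg at hcon
          have hq : a ≤ v + E p (l+1) := by omega
          have hq2 : v + E p (l+1) ≤ b := by omega
          exact notInD_E hp hv (hsub _ hq hq2)

/-- lifting an undefined position one level up while keeping its residue. -/
lemma lift_step (hp : FastGrowing p) {i : ℕ} {u : ℤ} (h1 : ¬ InD p i u)
    (h2 : 0 ≤ u) (h3 : u < P p i) :
    ¬ InD p (i+1) (u + P p i) ∧ 0 ≤ u + P p i ∧ u + P p i < P p (i+1) := by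
  have hPi := P_pos hp i
  have hPs := P_pos hp (i+1)
  have hg := P_grow hp i
  refine ⟨?_, by omega, by omega⟩
  rintro ⟨l, hl, hc⟩
  rcases Nat.lt_or_ge (l+1) (i+1) with h | h
  · have hd : P p (l+1) ∣ u - (u + P p i) := by
      have : u - (u + P p i) = -(P p i) := by ring
      rw [this]
      exact Dvd.dvd.neg_right (P_dvd hp (by omega))
    exact h1 ⟨l, by omega, (InCore_congr hp hd).1 hc⟩
  · have hli : l = i := by omega
    subst hli
    unfold InCore at hc
    rw [emod_self_range hPs (by omega) (by omega)] at hc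
    omega

lemma lift (hp : FastGrowing p) {i L : ℕ} {u : ℤ} (h : i ≤ L) (h1 : ¬ InD p i u) :
    ∃ u', ¬ InD p L u' ∧ 0 ≤ u' ∧ u' < P p L ∧ P p i ∣ u' - u := by
  have hPi := P_pos hp i
  have hbase : ¬ InD p i (u % P p i) ∧ 0 ≤ u % P p i ∧ u % P p i < P p i ∧
      P p i ∣ u % P p i - u := by
    have hd : P p i ∣ u % P p i - u := by
      refine ⟨-(u / P p i), ?_⟩
      have h := Int.mul_ediv_add_emod u (P p i)
      have e : P p i * (-(u / P p i)) = -(P p i * (u / P p i)) := by ring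
      omega
    exact ⟨fun hcon => h1 ((InD_congr hp (by
      have : P p i ∣ u - u % P p i := by
        obtain ⟨c, hc⟩ := hd
        refine ⟨-c, ?_⟩
        have e : P p i * (-c) = -(P p i * c) := by ring
        omega
      exact this)).1 hcon), Int.emod_nonneg u (by omega), Int.emod_lt_of_pos u hPi, hd⟩
  clear h1
  induction L with
  | zero =>
      have : i = 0 := by omega
      subst this
      exact ⟨u % P p 0, hbase.1, hbase.2.1, hbase.2.2.1, hbase.2.2.2⟩
  | succ L ihL =>
      rcases Nat.lt_or_ge L i with hL | hL
      · have : i = L + 1 := by omega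
        subst this
        exact ⟨u % P p (L+1), hbase.1, hbase.2.1, hbase.2.2.1, hbase.2.2.2⟩
      · obtain ⟨u', hu1, hu2, hu3, hu4⟩ := ihL hL
        obtain ⟨hs1, hs2, hs3⟩ := lift_step hp hu1 hu2 hu3
        refine ⟨u' + P p L, hs1, hs2, hs3, ?_⟩
        have : u' + P p L - u = (u' - u) + P p L := by ring
        rw [this]
        exact dvd_add hu4 (P_dvd hp hL)


/-! ### the Oxtoby sequence: values and periodicity -/

variable {X : Type*}

lemma levelSet_eq (hp : FastGrowing p) (n : ℤ) :
    {i : ℕ | n ∈ oxDefined p i} = {i : ℕ | InD p i n} := by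
  ext i; exact oxDefined_eq hp i n

lemma oxtoby_eq (hp : FastGrowing p) (x : ℕ → X) (n : ℤ) :
    oxtoby p x n = x (sInf {i : ℕ | InD p i n}) := by
  unfold oxtoby
  rw [levelSet_eq hp]

/-- value of the Oxtoby sequence at a position of exact level `j+1`. -/
lemma oxtoby_value (hp : FastGrowing p) (x : ℕ → X) {n : ℤ} {j : ℕ}
    (h1 : InD p (j+1) n) (h2 : ¬ InD p j n) : oxtoby p x n = x (j+1) := by
  rw [oxtoby_eq hp]
  congr 1
  have hub : sInf {i : ℕ | InD p i n} ≤ j + 1 := Nat.sInf_le h1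
  have hmem : sInf {i : ℕ | InD p i n} ∈ {i : ℕ | InD p i n} := Nat.sInf_mem ⟨j+1, h1⟩
  rcases Nat.lt_or_ge (sInf {i : ℕ | InD p i n}) (j+1) with h | h
  · exact absurd (InD_mono hp (by omega) hmem) h2
  · omega

/-- the Oxtoby sequence is `P i`-periodic at positions of level `≤ i`. -/
lemma oxtoby_congr (hp : FastGrowing p) (x : ℕ → X) {n n' : ℤ} {i : ℕ}
    (h1 : InD p i n) (hd : P p i ∣ n' - n) : oxtoby p x n' = oxtoby p x n := by
  rw [oxtoby_eq hp, oxtoby_eq hp]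
  congr 1
  congr 1
  ext k
  rcases le_or_gt k i with hk | hk
  · constructor
    · intro h
      exact (InD_congr hp (dvd_trans (P_dvd hp hk) hd)).2 h
    · intro h
      exact (InD_congr hp (dvd_trans (P_dvd hp hk) hd)).1 h
  · constructor
    · intro _
      exact InD_mono hp (by omega) h1
    · intro _
      exact InD_mono hp (by omega) ((InD_congr hp hd).1 h1)

lemma InCore_palindrome (hp : FastGrowing p) (l : ℕ) (n : ℤ) :
    InCore p l n ↔ InCore p l (-1 - n) := by
  rw [InCore_iff_window hp, InCore_iff_window hp]
  constructor
  · rintro ⟨k, h1, h2⟩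
    refine ⟨-k, ?_, ?_⟩ <;>
    · have e : -k * P p (l+1) = -(k * P p (l+1)) := by ring
      omega
  · rintro ⟨k, h1, h2⟩
    refine ⟨-k, ?_, ?_⟩ <;>
    · have e : -k * P p (l+1) = -(k * P p (l+1)) := by ring
      omega

lemma InD_palindrome (hp : FastGrowing p) (i : ℕ) (n : ℤ) :
    InD p i n ↔ InD p i (-1 - n) := by
  unfold InD
  constructor <;> rintro ⟨l, hl, hc⟩
  · exact ⟨l, hl, (InCore_palindrome hp l n).1 hc⟩
  · refine ⟨l, hl, ?_⟩
    have h := (InCore_palindrome hp l (-1-n)).1 hc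
    have e : (-1 - (-1 - n)) = n := by ring
    rwa [e] at h

/-- the Oxtoby sequence is a palindrome about `-1/2`. -/
lemma oxtoby_palindrome (hp : FastGrowing p) (x : ℕ → X) (n : ℤ) :
    oxtoby p x (-1 - n) = oxtoby p x n := by
  rw [oxtoby_eq hp, oxtoby_eq hp]
  congr 2
  ext k
  simp only [Set.mem_setOf_eq]
  exact (InD_palindrome hp k n).symm

/-- every integer position is defined at some level. -/
lemma InD_cover (hp : FastGrowing p) (n : ℤ) : ∃ i : ℕ, InD p i n := by
  obtain ⟨l, hc⟩ := exists_cover hp n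
  exact ⟨l+1, l, le_refl _, hc⟩

/-! ### basic facts about shifts and the orbit closure -/

lemma shiftZ_shiftZ (a b : ℤ) (w : ℤ → X) : shiftZ a (shiftZ b w) = shiftZ (a + b) w := by
  funext n
  simp only [shiftZ]
  congr 1
  ring

lemma shiftZ_zero (w : ℤ → X) : shiftZ 0 w = w := by
  funext n; simp [shiftZ]

section Topo

variable [TopologicalSpace X]

lemma continuous_shiftZ (a : ℤ) : Continuous (shiftZ a : (ℤ → X) → (ℤ → X)) :=
  continuous_pi fun n => continuous_apply (n + a)

lemma shiftZ_mem_orbitClosure {z : ℤ → X} {w : ℤ → X} (hw : w ∈ orbitClosure z) (a : ℤ) :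
    shiftZ a w ∈ orbitClosure z := by
  have himg : shiftZ a '' {y : ℤ → X | ∃ m : ℤ, y = shiftZ m z} ⊆
      {y : ℤ → X | ∃ m : ℤ, y = shiftZ m z} := by
    rintro _ ⟨v, ⟨m, rfl⟩, rfl⟩
    exact ⟨a + m, shiftZ_shiftZ a m z⟩
  have h1 : shiftZ a w ∈ shiftZ a '' closure {y : ℤ → X | ∃ m : ℤ, y = shiftZ m z} :=
    Set.mem_image_of_mem _ hw
  have h2 := image_closure_subset_closure_image (f := shiftZ (X := X) a)
    (s := {y : ℤ → X | ∃ m : ℤ, y = shiftZ m z}) (continuous_shiftZ a)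
  exact closure_mono himg (h2 h1)


/-! ### phases of points of the orbit closure -/

/-- `a` is an `i`-th level phase of `w`: on positions of level `≤ i`, `w (· + a)`
agrees with the Oxtoby sequence. -/
def Phase (p : ℕ → ℕ) (x : ℕ → X) (w : ℤ → X) (i : ℕ) (a : ℤ) : Prop :=
  ∀ n : ℤ, InD p i n → w (n + a) = oxtoby p x n

lemma phase_mono (hp : FastGrowing p) (x : ℕ → X) {w : ℤ → X} {i i' : ℕ} (h : i ≤ i') {a : ℤ}
    (hph : Phase p x w i' a) : Phase p x w i a := by
  intro n hn
  exact hph n (InD_mono hp h hn)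

lemma phase_congr (hp : FastGrowing p) (x : ℕ → X) {w : ℤ → X} {i : ℕ} {a a' : ℤ}
    (hph : Phase p x w i a) (hd : P p i ∣ a' - a) : Phase p x w i a' := by
  intro n hn
  have hn' : InD p i (n + (a' - a)) := by
    refine (InD_congr hp ?_).1 hn
    have e : n + (a' - a) - n = a' - a := by ring
    rw [e]; exact hd
  have e : n + (a' - a) + a = n + a' := by ring
  have h2 := hph (n + (a' - a)) hn'
  rw [e] at h2
  rw [h2]
  refine oxtoby_congr hp x hn ?_
  have e2 : n + (a' - a) - n = a' - a := by ring
  rw [e2]; exact hd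

variable [T2Space X]

/-- every point of the orbit closure has a phase at every level. -/
lemma phase_exists (hp : FastGrowing p) (x : ℕ → X) {w : ℤ → X}
    (hw : w ∈ orbitClosure (oxtoby p x)) (i : ℕ) :
    ∃ a : ℤ, 0 ≤ a ∧ a < P p i ∧ Phase p x w i a := by
  have hPi := P_pos hp i
  set G : Set (ℤ → X) := ⋃ a ∈ (Finset.Ico (0:ℤ) (P p i) : Set ℤ),
    {w : ℤ → X | Phase p x w i a} with hG
  have hclosed : IsClosed G := by
    apply Set.Finite.isClosed_biUnion (Finset.finite_toSet _)
    intro a _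
    have : {w : ℤ → X | Phase p x w i a} =
        ⋂ n ∈ {n : ℤ | InD p i n}, {w : ℤ → X | w (n + a) = oxtoby p x n} := by
      ext w; simp [Phase, Set.mem_iInter]
    rw [this]
    apply isClosed_biInter
    intro n _
    exact isClosed_eq (continuous_apply (n + a)) continuous_const
  have horb : {y : ℤ → X | ∃ m : ℤ, y = shiftZ m (oxtoby p x)} ⊆ G := by
    rintro _ ⟨m, rfl⟩
    have ha1 : 0 ≤ (-m) % P p i := Int.emod_nonneg _ (by omega)
    have ha2 : (-m) % P p i < P p i := Int.emod_lt_of_pos _ hPi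
    have hd : P p i ∣ (-m) % P p i + m := by
      have h := Int.mul_ediv_add_emod (-m) (P p i)
      refine ⟨-((-m) / P p i), ?_⟩
      have e : P p i * -(-m / P p i) = -(P p i * (-m / P p i)) := by ring
      omega
    apply Set.mem_biUnion (show ((-m) % P p i) ∈ ((Finset.Ico (0:ℤ) (P p i) : Finset ℤ) : Set ℤ) by
      simp only [Finset.coe_Ico, Set.mem_Ico]; exact ⟨ha1, ha2⟩)
    intro n hn
    show (shiftZ m (oxtoby p x)) (n + (-m) % P p i) = oxtoby p x n
    unfold shiftZ
    exact oxtoby_congr hp x hn (by obtain ⟨c, hc⟩ := hd; exact ⟨c, by omega⟩)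
  have hWG : w ∈ G := closure_minimal horb hclosed hw
  simp only [hG, Set.mem_iUnion, Set.mem_setOf_eq, exists_prop, Finset.coe_Ico,
    Set.mem_Ico] at hWG
  obtain ⟨a, haIco, hph⟩ := hWG
  exact ⟨a, haIco.1, haIco.2, hph⟩


lemma emod_sub_dvd (b u : ℤ) : b ∣ u % b - u := by
  refine ⟨-(u / b), ?_⟩
  have h := Int.mul_ediv_add_emod u b
  have e : b * -(u / b) = -(b * (u / b)) := by ring
  omega

/-- a compatible system of phases for a point of the orbit closure. -/
lemma phase_seq (hp : FastGrowing p) (x : ℕ → X) {y : ℤ → X}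
    (hy : y ∈ orbitClosure (oxtoby p x)) :
    ∃ s : ℕ → ℤ, (∀ i, Phase p x y i (s i)) ∧ (∀ i j, i ≤ j → P p i ∣ s j - s i) := by
  choose a _ _ ha using fun i => phase_exists hp x hy i
  have hne : (atTop : Filter ℕ).NeBot := atTop_neBot
  set u := @Ultrafilter.of ℕ atTop hne with hu
  have hclass : ∀ i : ℕ, ∃ ρ : ℤ, {r : ℕ | a r % P p i = ρ} ∈ u := by
    intro i
    have hPi := P_pos hp i
    have hcover : (Set.univ : Set ℕ) ⊆
        ⋃ ρ ∈ ((Finset.Ico (0:ℤ) (P p i)) : Set ℤ), {r : ℕ | a r % P p i = ρ} := by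
      intro r _
      apply Set.mem_biUnion (show (a r % P p i) ∈ ((Finset.Ico (0:ℤ) (P p i) : Finset ℤ) : Set ℤ) by
        simp only [Finset.coe_Ico, Set.mem_Ico]
        exact ⟨Int.emod_nonneg _ (by omega), Int.emod_lt_of_pos _ hPi⟩)
      simp
    have hmem : (⋃ ρ ∈ ((Finset.Ico (0:ℤ) (P p i)) : Set ℤ), {r : ℕ | a r % P p i = ρ}) ∈ u :=
      Filter.mem_of_superset Filter.univ_mem hcover
    obtain ⟨ρ, _, hρ⟩ := (Ultrafilter.finite_biUnion_mem_iff (Finset.finite_toSet _)).1 hmem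
    exact ⟨ρ, hρ⟩
  choose s hs using hclass
  have hle : (u : Filter ℕ) ≤ atTop := Ultrafilter.of_le _
  have key : ∀ i j : ℕ, i ≤ j → ∃ r : ℕ, i ≤ r ∧ j ≤ r ∧
      a r % P p i = s i ∧ a r % P p j = s j := by
    intro i j hij
    have h1 : ({r | a r % P p i = s i} ∩ ({r | a r % P p j = s j} ∩ {r | j ≤ r})) ∈ u :=
      Filter.inter_mem (hs i) (Filter.inter_mem (hs j) (hle (Filter.mem_atTop j)))
    obtain ⟨r, hr1, hr2, hr3⟩ := Ultrafilter.nonempty_of_mem h1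
    have hr3' : j ≤ r := hr3
    exact ⟨r, by omega, hr3', hr1, hr2⟩
  refine ⟨s, ?_, ?_⟩
  · intro i
    obtain ⟨r, hir, _, hri, _⟩ := key i i (le_refl i)
    have hphr : Phase p x y i (a r) := phase_mono hp x hir (ha r)
    refine phase_congr hp x hphr ?_
    have := emod_sub_dvd (P p i) (a r)
    rw [hri] at this
    exact this
  · intro i j hij
    obtain ⟨r, hir, hjr, hri, hrj⟩ := key i j hij
    have d1 : P p i ∣ s i - a r := by
      have := emod_sub_dvd (P p i) (a r); rwa [hri] at this
    have d2 : P p i ∣ s j - a r := by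
      have := emod_sub_dvd (P p j) (a r); rw [hrj] at this
      exact dvd_trans (P_dvd hp hij) this
    have e : s j - s i = (s j - a r) - (s i - a r) := by ring
    rw [e]
    exact dvd_sub d2 d1

end Topo

/-- a bounded monotone sequence of naturals is eventually constant. -/
lemma mono_bounded_stab {B : ℕ} : ∀ (a : ℕ → ℕ), (∀ i j, i ≤ j → a i ≤ a j) →
    (∀ i, a i ≤ B) → ∃ N, ∀ m, N ≤ m → a m = a N := by
  induction B with
  | zero => exact fun a _ hb => ⟨0, fun m _ => by have := hb m; have := hb 0; omega⟩
  | succ B ihB =>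
      intro a hmono hb
      by_cases h : ∃ i, a i = B + 1
      · obtain ⟨i, hi⟩ := h
        exact ⟨i, fun m hm => by have h1 := hmono i m hm; have := hb m; omega⟩
      · push_neg at h
        exact ihB a hmono (fun i => by have := hb i; have := h i; omega)


section Metric

variable [MetricSpace X]

lemma omega_hit {x : ℕ → X} {α : X} (hα : α ∈ omegaLimitSet x) (ε : ℝ) (hε : 0 < ε) (N : ℕ) :
    ∃ i, N ≤ i ∧ dist (x i) α < ε := by
  obtain ⟨φ, hmono, htend⟩ := hα
  obtain ⟨K, hK⟩ := (Metric.tendsto_atTop.1 htend) ε hε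
  refine ⟨φ (max K N), le_trans (le_max_right _ _) (hmono.le_apply), ?_⟩
  exact hK _ (le_max_left _ _)

/-- Bezout-type solvability of `t + k * per ≡ c (mod P)` when `gcd(per,P) ∣ c - t`. -/
lemma solve_congruence {per : ℕ} {Pm : ℕ} {c t : ℤ}
    (hd : ((Nat.gcd per Pm : ℕ) : ℤ) ∣ c - t) :
    ∃ k K : ℤ, t + k * (per : ℤ) = c + K * (Pm : ℤ) := by
  obtain ⟨e, he⟩ := hd
  have hg : ((Nat.gcd per Pm : ℕ) : ℤ) = (per : ℤ) * Int.gcdA (per : ℤ) (Pm : ℤ)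
      + (Pm : ℤ) * Int.gcdB (per : ℤ) (Pm : ℤ) := by
    have h1 : (Int.gcd (per : ℤ) (Pm : ℤ) : ℤ) = ((Nat.gcd per Pm : ℕ) : ℤ) := by
      simp [Int.gcd]
    rw [← h1]
    exact Int.gcd_eq_gcd_ab _ _
  refine ⟨e * Int.gcdA (per : ℤ) (Pm : ℤ), -(e * Int.gcdB (per : ℤ) (Pm : ℤ)), ?_⟩
  rw [hg] at he
  linear_combination -he

/-- Toeplitz points have no "total hole": every position is covered by some skeleton. -/
lemma no_total_hole (hp : FastGrowing p) {x : ℕ → X} (hL : (omegaLimitSet x).Nontrivial)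
    {y : ℤ → X} (hT : IsToeplitz y) {s : ℕ → ℤ}
    (hph : ∀ i, Phase p x y i (s i)) (hcompat : ∀ i j, i ≤ j → P p i ∣ s j - s i)
    (t : ℤ) : ∃ i : ℕ, InD p i (t - s i) := by
  by_contra hcon
  push_neg at hcon
  obtain ⟨per, hper1, hperiod⟩ := hT t
  -- gcd stabilization
  have hgd : ∀ i j, i ≤ j → Nat.gcd per (p i) ≤ Nat.gcd per (p j) := by
    intro i j hij
    have hdvd : Nat.gcd per (p i) ∣ Nat.gcd per (p j) :=
      Nat.dvd_gcd (Nat.gcd_dvd_left _ _)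
        (dvd_trans (Nat.gcd_dvd_right per (p i)) (by
          have := P_dvd hp hij
          unfold P at this
          exact_mod_cast this))
    refine Nat.le_of_dvd ?_ hdvd
    have : 0 < per := hper1
    exact Nat.gcd_pos_of_pos_left _ this
  have hbd : ∀ i, Nat.gcd per (p i) ≤ per := fun i =>
    Nat.le_of_dvd hper1 (Nat.gcd_dvd_left _ _)
  obtain ⟨i₀, hstab⟩ := mono_bounded_stab (fun i => Nat.gcd per (p i)) hgd hbd
  -- the key claim: y t is within ε of any ω-limit value
  have hkey : ∀ γ ∈ omegaLimitSet x, ∀ ε : ℝ, 0 < ε → dist (y t) γ < ε := by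
    intro γ hγ ε hε
    obtain ⟨i', hi'1, hi'2⟩ := omega_hit hγ ε hε (i₀ + 1)
    obtain ⟨j, rfl⟩ := Nat.exists_eq_add_of_le hi'1
    set jj := i₀ + j with hjj
    -- so i' = jj + 1 with jj ≥ i₀
    have hiden : i₀ + 1 + j = jj + 1 := by omega
    rw [hiden] at hi'2
    have hPj := P_pos hp jj
    have hPj1 := P_pos hp (jj+1)
    set u := (t - s jj) % P p jj with hu
    have hu0 : 0 ≤ u := Int.emod_nonneg _ (by omega)
    have hu1 : u < P p jj := Int.emod_lt_of_pos _ hPj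
    have hunotin : ¬ InD p jj u := by
      intro hin
      refine hcon jj ((InD_congr hp ?_).1 hin)
      have : t - s jj - u = -(u - (t - s jj)) := by ring
      rw [this]
      exact Dvd.dvd.neg_right (emod_sub_dvd _ _)
    have huin : InD p (jj+1) u := ⟨jj, le_refl _, InCore_small hp (by omega) hu1⟩
    -- solvability
    have hdvd0 : ((Nat.gcd per (p (jj+1)) : ℕ) : ℤ) ∣ (u + s (jj+1)) - t := by
      have e : (u + s (jj+1)) - t = (u - (t - s jj)) + (s (jj+1) - s jj) := by ring
      rw [e]
      have d1 : P p jj ∣ u - (t - s jj) := emod_sub_dvd _ _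
      have d2 : P p jj ∣ s (jj+1) - s jj := hcompat jj (jj+1) (by omega)
      have hgs : Nat.gcd per (p (jj+1)) = Nat.gcd per (p jj) := by
        have h1 := hstab jj (by omega)
        have h2 := hstab (jj+1) (by omega)
        omega
      rw [hgs]
      have hdP : ((Nat.gcd per (p jj) : ℕ) : ℤ) ∣ P p jj := by
        unfold P
        exact_mod_cast Nat.gcd_dvd_right per (p jj)
      exact dvd_add (dvd_trans hdP d1) (dvd_trans hdP d2)
    obtain ⟨k, K, hkK⟩ := solve_congruence hdvd0
    -- evaluate y at t + k * per
    have hperiod' : ∀ m : ℤ, (per:ℤ) ∣ m - t → y m = y t := hperiod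
    have hyy : y (t + k * (per : ℤ)) = y t := by
      apply hperiod'
      have e : t + k * (per : ℤ) - t = k * (per : ℤ) := by ring
      rw [e]
      exact ⟨k, mul_comm _ _⟩
    have hval : y (t + k * (per : ℤ)) = x (jj + 1) := by
      rw [hkK]
      have hin2 : InD p (jj+1) (u + K * P p (jj+1)) := by
        refine (InD_congr hp ?_).1 huin
        exact ⟨K, by ring⟩
      have e : u + s (jj+1) + K * (p (jj+1) : ℤ) = (u + K * P p (jj+1)) + s (jj+1) := by
        unfold P; ring
      rw [e]
      rw [hph (jj+1) _ hin2]
      rw [oxtoby_congr hp x huin (by exact ⟨K, by ring⟩)]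
      exact oxtoby_value hp x huin hunotin
    rw [← hyy, hval]
    exact hi'2
  -- two distinct limit values give a contradiction
  obtain ⟨α, hα, β, hβ, hαβ⟩ := hL
  have hd : 0 < dist α β := dist_pos.2 hαβ
  have h1 := hkey α hα (dist α β / 2) (by linarith)
  have h2 := hkey β hβ (dist α β / 2) (by linarith)
  have : dist α β ≤ dist (y t) α + dist (y t) β := dist_triangle_left _ _ _
  linarith

end Metric

/-! ### the flip `σ(w)(n) = w(-1-n)` and the reversor associated to a conjugacy -/

def sigmaRev (w : ℤ → X) : ℤ → X := fun n => w (-1 - n)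

lemma sigmaRev_sigmaRev (w : ℤ → X) : sigmaRev (sigmaRev w) = w := by
  funext n; simp only [sigmaRev]; congr 1; ring

lemma sigmaRev_shiftZ (a : ℤ) (w : ℤ → X) :
    sigmaRev (shiftZ a w) = shiftZ (-a) (sigmaRev w) := by
  funext n; simp only [sigmaRev, shiftZ]; congr 1; ring

lemma revSeq_eq (w : ℤ → X) : revSeq w = shiftZ (-1) (sigmaRev w) := by
  funext n; simp only [revSeq, shiftZ, sigmaRev]; congr 1; ring

section Topo2

variable [TopologicalSpace X]

lemma continuous_sigmaRev : Continuous (sigmaRev : (ℤ → X) → (ℤ → X)) :=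
  continuous_pi fun n => continuous_apply (-1 - n)

lemma sigmaRev_oxtoby (hp : FastGrowing p) (x : ℕ → X) :
    sigmaRev (oxtoby p x) = oxtoby p x := by
  funext n
  exact oxtoby_palindrome hp x n

lemma sigmaRev_mem_orbitClosure (hp : FastGrowing p) (x : ℕ → X) {w : ℤ → X}
    (hw : w ∈ orbitClosure (oxtoby p x)) : sigmaRev w ∈ orbitClosure (oxtoby p x) := by
  have himg : sigmaRev '' {v : ℤ → X | ∃ m : ℤ, v = shiftZ m (oxtoby p x)} ⊆
      {v : ℤ → X | ∃ m : ℤ, v = shiftZ m (oxtoby p x)} := by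
    rintro _ ⟨v, ⟨m, rfl⟩, rfl⟩
    refine ⟨-m, ?_⟩
    rw [sigmaRev_shiftZ, sigmaRev_oxtoby hp]
  have h1 : sigmaRev w ∈ sigmaRev '' closure {v : ℤ → X | ∃ m : ℤ, v = shiftZ m (oxtoby p x)} :=
    Set.mem_image_of_mem _ hw
  exact closure_mono himg ((image_closure_subset_closure_image continuous_sigmaRev) h1)

/-- from a self-conjugacy sending `y` to `y⁻¹`, build a continuous map `g` on the orbit
closure with `g (S^k y) = S^(-k) y` for all `k`. -/
lemma reversor_exists (hp : FastGrowing p) (x : ℕ → X) {y : ℤ → X}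
    (hy : y ∈ orbitClosure (oxtoby p x)) {f : (ℤ → X) → (ℤ → X)}
    (hf : IsConjugacy (orbitClosure (oxtoby p x)) (orbitClosure (oxtoby p x)) f)
    (hfy : f y = revSeq y) :
    ∃ g : (ℤ → X) → (ℤ → X), ContinuousOn g (orbitClosure (oxtoby p x)) ∧
      (∀ k : ℤ, g (shiftZ k y) = shiftZ (-k) y) := by
  obtain ⟨hmaps, hcont, _, hcomm⟩ := hf
  set O := orbitClosure (oxtoby p x) with hO
  have hgy : sigmaRev (shiftZ 1 (f y)) = y := by
    rw [hfy, revSeq_eq, shiftZ_shiftZ]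
    norm_num
    rw [shiftZ_zero, sigmaRev_sigmaRev]
  have hanti : ∀ w ∈ O, sigmaRev (shiftZ 1 (f (shiftZ 1 w)))
      = shiftZ (-1) (sigmaRev (shiftZ 1 (f w))) := by
    intro w hw
    rw [hcomm w hw, shiftZ_shiftZ 1 1 (f w), sigmaRev_shiftZ ((1:ℤ)+1) (f w),
      sigmaRev_shiftZ (1:ℤ) (f w), shiftZ_shiftZ (-1 : ℤ) (-1 : ℤ) (sigmaRev (f w))]
    congr 1 <;> ring_nf
  have hanti' : ∀ w ∈ O, sigmaRev (shiftZ 1 (f (shiftZ (-1) w)))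
      = shiftZ 1 (sigmaRev (shiftZ 1 (f w))) := by
    intro w hw
    have h1 := hanti (shiftZ (-1) w) (shiftZ_mem_orbitClosure hw (-1))
    rw [shiftZ_shiftZ 1 (-1) w] at h1
    norm_num at h1
    rw [shiftZ_zero] at h1
    rw [h1, shiftZ_shiftZ]
    norm_num
    rw [shiftZ_zero]
  have hgk : ∀ k : ℤ, sigmaRev (shiftZ 1 (f (shiftZ k y))) = shiftZ (-k) y := by
    intro k
    induction k using Int.induction_on with
    | zero => rw [shiftZ_zero, neg_zero, shiftZ_zero]; exact hgy
    | succ k ih =>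
        have hmem : shiftZ (k : ℤ) y ∈ O := shiftZ_mem_orbitClosure hy k
        have h1 := hanti (shiftZ (k:ℤ) y) hmem
        rw [shiftZ_shiftZ 1 (k:ℤ) y] at h1
        have e1 : (1 : ℤ) + k = k + 1 := by ring
        rw [e1] at h1
        rw [h1, ih, shiftZ_shiftZ]
        congr 1
        ring
    | pred k ih =>
        have hmem : shiftZ (-(k:ℤ)) y ∈ O := shiftZ_mem_orbitClosure hy (-k)
        have h1 := hanti' (shiftZ (-(k:ℤ)) y) hmem
        rw [shiftZ_shiftZ (-1) (-(k:ℤ)) y] at h1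
        have e1 : (-1 : ℤ) + -(k:ℤ) = -(k:ℤ) - 1 := by ring
        rw [e1] at h1
        rw [h1, ih, shiftZ_shiftZ]
        congr 1
        ring
  exact ⟨fun w => sigmaRev (shiftZ 1 (f w)),
    (continuous_sigmaRev.comp (continuous_shiftZ 1)).comp_continuousOn hcont, hgk⟩

end Topo2

/-! ### residue sequences along the inverse system -/

/-- monotonicity of residues of a compatible sequence. -/
lemma resid_mono (hp : FastGrowing p) {b : ℕ → ℤ} (hb : ∀ i j, i ≤ j → P p i ∣ b j - b i) :
    ∀ i j, i ≤ j → (b i % P p i ≤ b j % P p j ∧ P p i - b i % P p i ≤ P p j - b j % P p j) := by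
  have hstep : ∀ i, b i % P p i ≤ b (i+1) % P p (i+1) ∧
      P p i - b i % P p i ≤ P p (i+1) - b (i+1) % P p (i+1) := by
    intro i
    have hPi := P_pos hp i
    have hPs := P_pos hp (i+1)
    set r1 := b i % P p i with hr1
    set r2 := b (i+1) % P p (i+1) with hr2
    have h1 : 0 ≤ r1 := Int.emod_nonneg _ (by omega)
    have h2 : r1 < P p i := Int.emod_lt_of_pos _ hPi
    have h3 : 0 ≤ r2 := Int.emod_nonneg _ (by omega)
    have h4 : r2 < P p (i+1) := Int.emod_lt_of_pos _ hPs
    have hd : P p i ∣ r2 - r1 := by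
      have e : r2 - r1 = (r2 - b (i+1)) + (b (i+1) - b i) + -(r1 - b i) := by ring
      rw [e]
      exact dvd_add (dvd_add (dvd_trans (P_dvd_succ hp i) (emod_sub_dvd (P p (i+1)) (b (i+1))))
        (hb i (i+1) (by omega))) (Dvd.dvd.neg_right (emod_sub_dvd (P p i) (b i)))
    obtain ⟨k, hk⟩ := hd
    constructor
    · rcases le_or_gt 0 k with hk0 | hk0
      · have : 0 ≤ P p i * k := mul_nonneg (by omega) hk0
        omega
      · exfalso
        have : P p i * k ≤ P p i * (-1) := mul_le_mul_of_nonneg_left (by omega) (by omega)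
        omega
    · have hm : P p i ∣ P p (i+1) - P p i * k :=
        dvd_sub (P_dvd_succ hp i) (Dvd.intro k rfl)
      have hmpos : 0 < P p (i+1) - P p i * k := by omega
      have := Int.le_of_dvd hmpos hm
      omega
  intro i j hij
  induction j, hij using Nat.le_induction with
  | base => exact ⟨le_refl _, le_refl _⟩
  | succ j hij ih =>
      obtain ⟨a1, a2⟩ := ih
      obtain ⟨b1, b2⟩ := hstep j
      exact ⟨le_trans a1 b1, le_trans a2 b2⟩

/-- a compatible sequence whose residues come within a bounded distance of `0`
infinitely often is integral. -/
lemma resid_stab (hp : FastGrowing p) {b : ℕ → ℤ} (hb : ∀ i j, i ≤ j → P p i ∣ b j - b i)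
    {r : ℤ} (hr : 0 ≤ r)
    (hbig : ∀ N : ℕ, ∃ i, N ≤ i ∧ (b i % P p i ≤ r ∨ P p i - b i % P p i ≤ r)) :
    ∃ c : ℤ, ∀ i, P p i ∣ b i - c := by
  have hmono := resid_mono hp hb
  have key : ∀ (ρ : ℕ → ℤ), (∀ i j, i ≤ j → ρ i ≤ ρ j) → (∀ i, 0 ≤ ρ i) →
      (∀ N : ℕ, ∃ i, N ≤ i ∧ ρ i ≤ r) → ∃ N, ∀ m, N ≤ m → ρ m = ρ N := by
    intro ρ hmo hnn hcof
    have hall : ∀ i, ρ i ≤ r := by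
      intro i
      obtain ⟨i', hi1, hi2⟩ := hcof i
      exact le_trans (hmo i i' hi1) hi2
    obtain ⟨N, hN⟩ := mono_bounded_stab (B := r.toNat) (fun n => (ρ n).toNat)
      (fun i j hij => Int.toNat_le_toNat (hmo i j hij)) (fun i => by
        show (ρ i).toNat ≤ r.toNat
        have := hall i; have := hnn i; omega)
    refine ⟨N, fun m hm => ?_⟩
    have := hN m hm
    have h1 := hnn m; have h2 := hnn N
    omega
  by_cases hlow : ∀ N : ℕ, ∃ i, N ≤ i ∧ b i % P p i ≤ r
  · obtain ⟨N, hN⟩ := key (fun i => b i % P p i) (fun i j hij => (hmono i j hij).1)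
      (fun i => Int.emod_nonneg _ (by have := P_pos hp i; omega)) hlow
    refine ⟨b N % P p N, fun i => ?_⟩
    set m := max i N with hm
    have d1 : P p i ∣ b i - b m := by
      obtain ⟨c, hc⟩ := hb i m (le_max_left _ _)
      refine ⟨-c, ?_⟩
      have e : P p i * -c = -(P p i * c) := by ring
      omega
    have d2 : P p m ∣ b m - b N % P p N := by
      have e : b m % P p m = b N % P p N := hN m (le_max_right _ _)
      rw [← e]
      obtain ⟨c, hc⟩ := emod_sub_dvd (P p m) (b m)
      refine ⟨-c, ?_⟩
      have e2 : P p m * -c = -(P p m * c) := by ring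
      omega
    have e : b i - b N % P p N = (b i - b m) + (b m - b N % P p N) := by ring
    rw [e]
    exact dvd_add d1 (dvd_trans (P_dvd hp (le_max_left _ _)) d2)
  · push_neg at hlow
    obtain ⟨N₀, hN₀⟩ := hlow
    have hhigh : ∀ N : ℕ, ∃ i, N ≤ i ∧ P p i - b i % P p i ≤ r := by
      intro N
      obtain ⟨i, hi1, hi2⟩ := hbig (max N N₀)
      rcases hi2 with h | h
      · exact absurd h (not_le.2 (hN₀ i (le_trans (le_max_right _ _) hi1)))
      · exact ⟨i, le_trans (le_max_left _ _) hi1, h⟩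
    obtain ⟨N, hN⟩ := key (fun i => P p i - b i % P p i) (fun i j hij => (hmono i j hij).2)
      (fun i => by
        show (0:ℤ) ≤ P p i - b i % P p i
        have := Int.emod_lt_of_pos (b i) (P_pos hp i)
        omega) hhigh
    refine ⟨-(P p N - b N % P p N), fun i => ?_⟩
    set m := max i N with hm
    have d1 : P p i ∣ b i - b m := by
      obtain ⟨c, hc⟩ := hb i m (le_max_left _ _)
      refine ⟨-c, ?_⟩
      have e : P p i * -c = -(P p i * c) := by ring
      omega
    have d2 : P p m ∣ b m + (P p m - b m % P p m) := by
      have h0 := emod_sub_dvd (P p m) (b m)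
      obtain ⟨c, hc⟩ := h0
      exact ⟨1 - c, by have e : P p m * (1 - c) = P p m - P p m * c := by ring
                       omega⟩
    have e : P p m - b m % P p m = P p N - b N % P p N := hN m (le_max_right _ _)
    have goal_eq : b i - -(P p N - b N % P p N)
        = (b i - b m) + (b m + (P p m - b m % P p m)) := by
      rw [← e]; ring
    rw [goal_eq]
    exact dvd_add d1 (dvd_trans (P_dvd hp (le_max_left _ _)) d2)


section Main

variable [MetricSpace X] [CompactSpace X]

/-- the discontinuity scheme: if the combinatorial supply condition holds at every
radius, we contradict the continuity of the reversor. -/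
lemma scheme_contradiction (hp : FastGrowing p) {x : ℕ → X} (hL : (omegaLimitSet x).Nontrivial)
    {y : ℤ → X} (hy : y ∈ orbitClosure (oxtoby p x)) {s : ℕ → ℤ}
    (hph : ∀ i, Phase p x y i (s i)) (hcompat : ∀ i j, i ≤ j → P p i ∣ s j - s i)
    {g : (ℤ → X) → (ℤ → X)} (hgcont : ContinuousOn g (orbitClosure (oxtoby p x)))
    (hgk : ∀ k : ℤ, g (shiftZ k y) = shiftZ (-k) y)
    (hPred : ∀ r : ℕ, ∃ (l : ℕ) (vq e uu : ℤ), uu = -(2 * s (l+1)) - vq * P p (l+1) - e ∧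
      |e| + 1 + (r : ℤ) ≤ E p (l+1) ∧ ¬ InD p (l+1) uu) : False := by
  obtain ⟨α, hα, β, hβ, hαβ⟩ := hL
  choose l vq ee uu huu hsz hnotin using hPred
  set n : ℕ → ℤ := fun r => -(s ((l r + 1))) - uu r with hn
  -- the window property
  have hwin : ∀ (r : ℕ) (t K : ℤ), |t| ≤ (r:ℤ) → y (n r + t + K * P p ((l r + 1))) = y (n r + t) := by
    intro r t K ht
    have habs_e1 : -|ee r| ≤ ee r := neg_abs_le _
    have habs_e2 : ee r ≤ |ee r| := le_abs_self _
    have habs_t1 : -|t| ≤ t := neg_abs_le _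
    have habs_t2 : t ≤ |t| := le_abs_self _
    have hszr := hsz r
    have hpos_in : InD p ((l r + 1)) (n r + t - s ((l r + 1))) := by
      have h0 := run_subset hp (l r) (vq r * P p ((l r + 1))) (ee r + t)
        ⟨vq r, mul_comm _ _⟩ (by omega) (by omega)
      have e1 : vq r * P p ((l r + 1)) + (ee r + t) = n r + t - s ((l r + 1)) := by
        simp only [hn]
        have := huu r
        omega
      rwa [e1] at h0
    have h1 : InD p ((l r + 1)) (n r + t - s ((l r + 1)) + K * P p ((l r + 1))) :=
      (InD_congr hp ⟨K, by ring⟩).1 hpos_in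
    have e2 : n r + t + K * P p ((l r + 1)) = (n r + t - s ((l r + 1)) + K * P p ((l r + 1))) + s ((l r + 1)) := by ring
    rw [e2, hph ((l r + 1)) _ h1]
    have e4 := oxtoby_congr hp x hpos_in (n' := n r + t - s ((l r + 1)) + K * P p ((l r + 1))) ⟨K, by ring⟩
    rw [e4]
    have e3 : n r + t = (n r + t - s ((l r + 1))) + s ((l r + 1)) := by ring
    conv_rhs => rw [e3]
    rw [hph ((l r + 1)) _ hpos_in]
  -- the escape property
  have hesc : ∀ (r : ℕ) (j' : ℕ), (l r + 1) ≤ j' → ∃ K : ℤ, y (-(n r) - K * P p ((l r + 1))) = x (j' + 1) := by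
    intro r j' hj'
    obtain ⟨u', hu'1, hu'2, hu'3, hu'4⟩ := lift hp hj' (hnotin r)
    have hu'in : InD p (j'+1) u' := ⟨j', le_refl _,
      InCore_small hp (by have := P_pos hp j'; omega) hu'3⟩
    obtain ⟨K, hK⟩ : ∃ K : ℤ, s ((l r + 1)) + uu r - u' - s (j'+1) = K * P p ((l r + 1)) := by
      have d2 : P p ((l r + 1)) ∣ s (j'+1) - s ((l r + 1)) := hcompat _ _ (by omega)
      have d1 : P p ((l r + 1)) ∣ s ((l r + 1)) + uu r - u' - s (j'+1) := by
        have e : s ((l r + 1)) + uu r - u' - s (j'+1) = -(u' - uu r) + -(s (j'+1) - s ((l r + 1))) := by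
          ring
        rw [e]
        exact dvd_add (Dvd.dvd.neg_right hu'4) (Dvd.dvd.neg_right d2)
      obtain ⟨K, hK⟩ := d1
      exact ⟨K, by rw [hK]; ring⟩
    refine ⟨K, ?_⟩
    have e1 : -(n r) - K * P p ((l r + 1)) = u' + s (j'+1) := by
      simp only [hn]
      omega
    rw [e1, hph (j'+1) u' hu'in]
    exact oxtoby_value hp x hu'in hu'1
  -- selecting the values near a limit point
  have hsel : ∀ (γ : X), γ ∈ omegaLimitSet x → ∀ r : ℕ, ∃ (j' : ℕ) (K : ℤ),
      (l r + 1) ≤ j' ∧ dist (x (j'+1)) γ < 1/(r+1) ∧ y (-(n r) - K * P p ((l r + 1))) = x (j'+1) := by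
    intro γ hγ r
    have hεpos : (0:ℝ) < 1/(r+1) := by positivity
    obtain ⟨i, hi1, hi2⟩ := omega_hit hγ _ hεpos ((l r + 1) + 1)
    obtain ⟨j', rfl⟩ : ∃ j', i = j' + 1 := ⟨i - 1, by omega⟩
    have hj' : (l r + 1) ≤ j' := by omega
    obtain ⟨K, hK⟩ := hesc r j' hj'
    exact ⟨j', K, hj', hi2, hK⟩
  choose jA KA hjA hdA hvA using hsel α hα
  choose jB KB hjB hdB hvB using hsel β hβ
  set NA : ℕ → ℤ := fun r => n r + KA r * P p ((l r + 1)) with hNA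
  set NB : ℕ → ℤ := fun r => n r + KB r * P p ((l r + 1)) with hNB
  set A : ℕ → (ℤ → X) := fun r => shiftZ (NA r) y with hA
  set B : ℕ → (ℤ → X) := fun r => shiftZ (NB r) y with hB
  have hAB : ∀ (r : ℕ) (t : ℤ), |t| ≤ (r:ℤ) → A r t = B r t := by
    intro r t ht
    show y (t + NA r) = y (t + NB r)
    have eA : t + NA r = n r + t + KA r * P p ((l r + 1)) := by simp only [hNA]; ring
    have eB : t + NB r = n r + t + KB r * P p ((l r + 1)) := by simp only [hNB]; ring
    rw [eA, eB, hwin r t (KA r) ht, hwin r t (KB r) ht]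
  -- limits along an ultrafilter
  have hne : (atTop : Filter ℕ).NeBot := atTop_neBot
  set u := @Ultrafilter.of ℕ atTop hne with hu
  have hle : (u : Filter ℕ) ≤ atTop := Ultrafilter.of_le _
  have hAO : ∀ r, A r ∈ orbitClosure (oxtoby p x) := fun r => shiftZ_mem_orbitClosure hy _
  obtain ⟨w, -, hw⟩ := isCompact_univ.ultrafilter_le_nhds (u.map A) (by
    rw [le_principal_iff]; exact Filter.univ_mem)
  have hTendA : Filter.Tendsto A (u : Filter ℕ) (𝓝 w) := by
    rw [Filter.Tendsto, ← Ultrafilter.coe_map]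
    exact hw
  have hwO : w ∈ orbitClosure (oxtoby p x) := by
    have hcl : IsClosed (orbitClosure (oxtoby p x)) := isClosed_closure
    exact hcl.mem_of_tendsto hTendA (Filter.Eventually.of_forall hAO)
  have hTendB : Filter.Tendsto B (u : Filter ℕ) (𝓝 w) := by
    rw [tendsto_pi_nhds] at hTendA ⊢
    intro t
    refine (hTendA t).congr' ?_
    have hmem : {r : ℕ | t.natAbs ≤ r} ∈ (u : Filter ℕ) := hle (Filter.mem_atTop _)
    refine Filter.eventuallyEq_of_mem hmem (fun r hr => ?_)
    have ht : |t| ≤ (r : ℤ) := by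
      have h1 : (t.natAbs : ℤ) = |t| := Int.abs_eq_natAbs t |>.symm
      have h2 : t.natAbs ≤ r := hr
      omega
    exact hAB r t ht
  have hTendA' : Filter.Tendsto A (u : Filter ℕ) (𝓝[orbitClosure (oxtoby p x)] w) :=
    tendsto_nhdsWithin_iff.2 ⟨hTendA, Filter.Eventually.of_forall hAO⟩
  have hgw : Filter.Tendsto g (𝓝[orbitClosure (oxtoby p x)] w) (𝓝 (g w)) := hgcont w hwO
  have hgA : Filter.Tendsto (fun r => g (A r)) (u : Filter ℕ) (𝓝 (g w)) := hgw.comp hTendA'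
  -- and the same for B
  have hTendB' : Filter.Tendsto B (u : Filter ℕ) (𝓝[orbitClosure (oxtoby p x)] w) :=
    tendsto_nhdsWithin_iff.2 ⟨hTendB, Filter.Eventually.of_forall
      (fun r => shiftZ_mem_orbitClosure hy _)⟩
  have hgB : Filter.Tendsto (fun r => g (B r)) (u : Filter ℕ) (𝓝 (g w)) := hgw.comp hTendB'
  -- evaluation at coordinate 0
  have hevalA : Filter.Tendsto (fun r => g (A r) 0) (u : Filter ℕ) (𝓝 (g w 0)) :=
    (tendsto_pi_nhds.1 hgA) 0
  have hevalB : Filter.Tendsto (fun r => g (B r) 0) (u : Filter ℕ) (𝓝 (g w 0)) :=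
    (tendsto_pi_nhds.1 hgB) 0
  have hvalA : ∀ r : ℕ, g (A r) 0 = x (jA r + 1) := by
    intro r
    have h1 : g (A r) = shiftZ (-(NA r)) y := hgk (NA r)
    rw [h1]
    show y (0 + -(NA r)) = _
    have e : 0 + -(NA r) = -(n r) - KA r * P p ((l r + 1)) := by simp only [hNA]; ring
    rw [e]
    exact hvA r
  have hvalB : ∀ r : ℕ, g (B r) 0 = x (jB r + 1) := by
    intro r
    have h1 : g (B r) = shiftZ (-(NB r)) y := hgk (NB r)
    rw [h1]
    show y (0 + -(NB r)) = _
    have e : 0 + -(NB r) = -(n r) - KB r * P p ((l r + 1)) := by simp only [hNB]; ring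
    rw [e]
    exact hvB r
  have hlim : ∀ (γ : X) (jj : ℕ → ℕ), (∀ r, dist (x (jj r + 1)) γ < 1/(r+1)) →
      Filter.Tendsto (fun r : ℕ => x (jj r + 1)) atTop (𝓝 γ) := by
    intro γ jj hd
    rw [Metric.tendsto_atTop]
    intro ε hε
    obtain ⟨M, hM⟩ := exists_nat_one_div_lt hε
    refine ⟨M, fun r hr => ?_⟩
    have h1 : (1:ℝ)/(r+1) ≤ 1/(M+1) := by
      apply one_div_le_one_div_of_le
      · positivity
      · have : (M:ℝ) ≤ r := by exact_mod_cast hr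
        linarith
    calc dist (x (jj r + 1)) γ < 1/(r+1) := hd r
      _ ≤ 1/(M+1) := h1
      _ < ε := hM
  have hαeq : g w 0 = α := by
    refine tendsto_nhds_unique hevalA ?_
    have h2 := (hlim α jA hdA).mono_left hle
    exact h2.congr (fun r => (hvalA r).symm)
  have hβeq : g w 0 = β := by
    refine tendsto_nhds_unique hevalB ?_
    have h2 := (hlim β jB hdB).mono_left hle
    exact h2.congr (fun r => (hvalB r).symm)
  exact hαβ (hαeq ▸ hβeq ▸ rfl)

/-- the phase doubles to an integer. -/
lemma two_s_integral (hp : FastGrowing p) {x : ℕ → X} (hL : (omegaLimitSet x).Nontrivial)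
    {y : ℤ → X} (hy : y ∈ orbitClosure (oxtoby p x)) {s : ℕ → ℤ}
    (hph : ∀ i, Phase p x y i (s i)) (hcompat : ∀ i j, i ≤ j → P p i ∣ s j - s i)
    {g : (ℤ → X) → (ℤ → X)} (hgcont : ContinuousOn g (orbitClosure (oxtoby p x)))
    (hgk : ∀ k : ℤ, g (shiftZ k y) = shiftZ (-k) y) :
    ∃ c : ℤ, ∀ i, P p i ∣ 2 * s i - c := by
  by_cases hPred : ∀ r : ℕ, ∃ (l : ℕ) (vq e uu : ℤ),
      uu = -(2 * s (l+1)) - vq * P p (l+1) - e ∧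
      |e| + 1 + (r : ℤ) ≤ E p (l+1) ∧ ¬ InD p (l+1) uu
  · exact absurd (scheme_contradiction hp hL hy hph hcompat hgcont hgk hPred) id
  · push_neg at hPred
    obtain ⟨r, hr⟩ := hPred
    have hb : ∀ i j, i ≤ j → P p i ∣ (2 * s j) - (2 * s i) := by
      intro i j hij
      have e : 2 * s j - 2 * s i = 2 * (s j - s i) := by ring
      rw [e]
      exact Dvd.dvd.mul_left (hcompat i j hij) 2
    have hbig : ∀ N : ℕ, ∃ i, N ≤ i ∧ ((2 * s i) % P p i ≤ (r:ℤ)+1 ∨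
        P p i - (2 * s i) % P p i ≤ (r:ℤ)+1) := by
      intro N
      set L := max N r with hLdef
      have hLr : r ≤ L := le_max_right _ _
      have hPL : (r : ℤ) + 1 ≤ P p L := by
        have := P_big hp L
        omega
      have hE : (r : ℤ) + 1 ≤ E p (L+1) := le_trans hPL (E_lb hp L)
      set cs := E p (L+1) - 1 - (r:ℤ) with hcs
      have hcs0 : 0 ≤ cs := by omega
      have hsub : ∀ m : ℤ, -(2 * s (L+1)) - cs ≤ m → m ≤ -(2 * s (L+1)) + cs →
          InD p (L+1) m := by
        intro m h1 h2
        refine hr L 0 (-(2 * s (L+1)) - m) m (by ring) ?_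
        have habs : |(-(2 * s (L+1)) - m)| ≤ cs := by
          rw [abs_le]
          constructor <;> omega
        omega
      obtain ⟨l', v, hl', hdvd, hva, hvb⟩ := interval_in_run hp (L+1)
        (-(2 * s (L+1)) - cs) (-(2 * s (L+1)) + cs) (by omega) (fun nn ha hb => hsub nn ha hb)
      have hll : l' = L := by
        by_contra hne
        have h1 : l' + 1 ≤ L := by omega
        have h2 : E p (l'+1) ≤ E p L := E_mono hp h1
        have h3 : E p (L+1) = E p L + P p L := E_succ _
        omega
      subst hll
      set dd := -(2 * s (L+1)) - v with hdd
      have hd1 : -(r:ℤ) - 1 ≤ dd := by omega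
      have hd2 : dd ≤ (r:ℤ) := by omega
      obtain ⟨q, hq⟩ := hdvd
      have hPL1 : P p L < P p (L+1) := by
        have := P_grow hp L
        have := P_pos hp L
        omega
      have hres : (2 * s (L+1)) % P p (L+1) = (-dd) % P p (L+1) := by
        have e1 : 2 * s (L+1) = -dd + P p (L+1) * (-q) := by
          have e2 : P p (L+1) * (-q) = -(P p (L+1) * q) := by ring
          omega
        rw [e1]
        exact emod_shift _ _ _
      refine ⟨L+1, by omega, ?_⟩
      rcases le_or_gt dd 0 with hc0 | hc0
      · left
        rw [hres, emod_self_range (P_pos hp (L+1)) (by omega) (by omega)]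
        omega
      · right
        have e3 : (-dd) % P p (L+1) = P p (L+1) - dd := by
          have e4 : -dd = (P p (L+1) - dd) + P p (L+1) * (-1) := by ring
          rw [e4, emod_shift, emod_self_range (P_pos hp (L+1)) (by omega) (by omega)]
        rw [hres, e3]
        omega
    exact resid_stab hp hb (by omega) hbig

/-- with full covering, an integral double forces an integral phase. -/
lemma s_integral (hp : FastGrowing p) {x : ℕ → X} (hL : (omegaLimitSet x).Nontrivial)
    {y : ℤ → X} (hT : IsToeplitz y) {s : ℕ → ℤ}
    (hph : ∀ i, Phase p x y i (s i)) (hcompat : ∀ i j, i ≤ j → P p i ∣ s j - s i)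
    (hc : ∃ c : ℤ, ∀ i, P p i ∣ 2 * s i - c) : ∃ m : ℤ, ∀ i, P p i ∣ s i - m := by
  obtain ⟨c, hc⟩ := hc
  by_cases hlow : ∀ N : ℕ, ∃ i, N ≤ i ∧ (s i % P p i ≤ |c| ∨ P p i - s i % P p i ≤ |c|)
  · exact resid_stab hp hcompat (abs_nonneg c) hlow
  · push_neg at hlow
    obtain ⟨N₀, hN₀⟩ := hlow
    -- in the remaining case the phase sits exactly in the middle at every large scale
    have hmid : ∀ i, N₀ ≤ i → 2 * (s i % P p i) = c + P p i := by
      intro i hi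
      obtain ⟨h1, h2⟩ := hN₀ i hi
      have hr1 : 0 ≤ s i % P p i := Int.emod_nonneg _ (by have := P_pos hp i; omega)
      have hr2 : s i % P p i < P p i := Int.emod_lt_of_pos _ (P_pos hp i)
      have hd : P p i ∣ 2 * (s i % P p i) - c := by
        have e : 2 * (s i % P p i) - c = 2 * (s i % P p i - s i) + (2 * s i - c) := by ring
        rw [e]
        exact dvd_add (Dvd.dvd.mul_left (emod_sub_dvd _ _) 2) (hc i)
      obtain ⟨k, hk⟩ := hd
      have habs := abs_nonneg c
      have hk1 : k = 1 := by
        rcases lt_trichotomy k 1 with hk0 | hk0 | hk0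
        · exfalso
          have : P p i * k ≤ P p i * 0 := mul_le_mul_of_nonneg_left (by omega) (by have := P_pos hp i; omega)
          have habs1 : -|c| ≤ c := neg_abs_le _
          have habs2 : c ≤ |c| := le_abs_self _
          omega
        · exact hk0
        · exfalso
          have : P p i * 2 ≤ P p i * k := mul_le_mul_of_nonneg_left (by omega) (by have := P_pos hp i; omega)
          have habs1 : -|c| ≤ c := neg_abs_le _
          have habs2 : c ≤ |c| := le_abs_self _
          omega
      rw [hk1] at hk
      omega
    -- construct a totally uncovered position, contradicting `no_total_hole`
    exfalso
    set t := E p (N₀+1) + s (N₀+1) % P p (N₀+1) - P p (N₀+1) with ht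
    have hhole : ∀ i : ℕ, ¬ InD p i (t - s i) := by
      rintro i ⟨l, hl, hcore⟩
      rcases le_or_gt (l+1) (N₀+1) with hcase | hcase
      · -- low scales: congruent to `E (N₀+1)`, which avoids all cores
        have hd : P p (l+1) ∣ (E p (N₀+1)) - (t - s i) := by
          have e : (E p (N₀+1)) - (t - s i) = -(s (N₀+1) % P p (N₀+1) - s (N₀+1))
              - (s (N₀+1) - s (l+1)) + (s i - s (l+1)) + P p (N₀+1) := by ring
          rw [e]
          have d1 : P p (l+1) ∣ s (N₀+1) % P p (N₀+1) - s (N₀+1) :=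
            dvd_trans (P_dvd hp hcase) (emod_sub_dvd _ _)
          have d2 : P p (l+1) ∣ s (N₀+1) - s (l+1) := hcompat _ _ hcase
          have d3 : P p (l+1) ∣ s i - s (l+1) := hcompat _ _ hl
          have d4 : P p (l+1) ∣ P p (N₀+1) := P_dvd hp hcase
          exact dvd_add (dvd_add (dvd_sub (Dvd.dvd.neg_right d1) d2) d3) d4
        exact E_not_inCore hp hcase ((InCore_congr hp hd).1 hcore)
      · -- high scales: the middle position avoids the core
        have hmidL : 2 * (s (N₀+1) % P p (N₀+1)) = c + P p (N₀+1) := hmid (N₀+1) (by omega)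
        have hmidl : 2 * (s (l+1) % P p (l+1)) = c + P p (l+1) := hmid (l+1) (by omega)
        set val := E p (N₀+1) + s (N₀+1) % P p (N₀+1) - P p (N₀+1) - s (l+1) % P p (l+1)
          with hval
        have hd : P p (l+1) ∣ val - (t - s i) := by
          have e : val - (t - s i) = -(s (l+1) % P p (l+1) - s (l+1))
              + (s i - s (l+1)) := by ring
          rw [e]
          exact dvd_add (Dvd.dvd.neg_right (emod_sub_dvd _ _)) (hcompat _ _ hl)
        have hcore2 : InCore p l val := (InCore_congr hp hd).1 hcore
        have h2val : 2 * val = 2 * E p (N₀+1) - P p (N₀+1) - P p (l+1) := by omega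
        have hE1 : 1 ≤ E p (N₀+1) := E_pos hp N₀
        have hE2 : 2 * E p (N₀+1) ≤ P p (N₀+1) := by
          have h5 := E_ub hp N₀
          have h6 := P_grow hp N₀
          omega
        have hPLl : P p (N₀+1) ≤ P p l := P_mono hp (by omega)
        have hgl := P_grow hp l
        have hPl := P_pos hp l
        have hmod : val % P p (l+1) = val + P p (l+1) := by
          have e4 : val % P p (l+1) = ((val + P p (l+1)) + P p (l+1) * (-1)) % P p (l+1) := by
            congr 1
            ring
          rw [e4, emod_shift]
          exact emod_self_range (P_pos hp (l+1)) (by omega) (by omega)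
        unfold InCore at hcore2
        rw [hmod] at hcore2
        omega
    obtain ⟨i, hi⟩ := no_total_hole hp hL hT hph hcompat t
    exact hhole i hi

/-- integral phase means `y` is a shift of the Oxtoby sequence. -/
lemma y_eq_shift (hp : FastGrowing p) (x : ℕ → X) {y : ℤ → X} {s : ℕ → ℤ}
    (hph : ∀ i, Phase p x y i (s i)) {m : ℤ} (hm : ∀ i, P p i ∣ s i - m) :
    y = shiftZ (-m) (oxtoby p x) := by
  have key : ∀ n : ℤ, y (n + m) = oxtoby p x n := by
    intro n
    obtain ⟨i, hi⟩ := InD_cover hp n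
    refine phase_congr hp x (hph i) ?_ n hi
    obtain ⟨k, hk⟩ := hm i
    exact ⟨-k, by have e : P p i * -k = -(P p i * k) := by ring
                  omega⟩
  funext k
  have h1 := key (k - m)
  have e : k - m + m = k := by ring
  rw [e] at h1
  rw [h1]
  show oxtoby p x (k - m) = oxtoby p x (k + -m)
  first
    | rfl
    | (congr 1; ring)

/-- the forward direction: a shift of the Oxtoby sequence is reverse-conjugate to itself
via a power of the shift, thanks to the palindromic structure. -/
lemma forward_direction (hp : FastGrowing p) (x : ℕ → X) {y : ℤ → X} {m : ℤ}
    (hym : y = shiftZ m (oxtoby p x)) :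
    ∃ f : (ℤ → X) → (ℤ → X),
      IsConjugacy (orbitClosure (oxtoby p x)) (orbitClosure (oxtoby p x)) f ∧
      f y = revSeq y := by
  refine ⟨shiftZ (-(2*m+1)), ⟨fun w hw => shiftZ_mem_orbitClosure hw _,
    (continuous_shiftZ _).continuousOn,
    ⟨shiftZ (2*m+1), fun w hw => shiftZ_mem_orbitClosure hw _,
      (continuous_shiftZ _).continuousOn, ?_, ?_⟩, ?_⟩, ?_⟩
  · intro a _
    rw [shiftZ_shiftZ]
    have e : (2*m+1) + (-(2*m+1)) = 0 := by ring
    rw [e, shiftZ_zero]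
  · intro a _
    rw [shiftZ_shiftZ]
    have e : (-(2*m+1)) + (2*m+1) = 0 := by ring
    rw [e, shiftZ_zero]
  · intro a _
    rw [shiftZ_shiftZ, shiftZ_shiftZ]
    congr 1
    ring
  · subst hym
    rw [shiftZ_shiftZ]
    funext n
    show oxtoby p x (n + (-(2*m+1) + m)) = revSeq (shiftZ m (oxtoby p x)) n
    show oxtoby p x (n + (-(2*m+1) + m)) = oxtoby p x (-n + m)
    rw [← oxtoby_palindrome hp x (-n + m)]
    congr 1
    ring

end Main

end OxProof


/-- Theorem `MT1'`: suppose `L((x_i))` has at least two points and `x` is a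
Toeplitz sequence in the Oxtoby system of `z`. Then `x` is a shift of `z` iff there is a
self-conjugacy of the system sending `x` to its reverse `x⁻¹`. -/
theorem oxtoby_shift_iff_reverse_conjugate {X : Type*} [MetricSpace X] [CompactSpace X]
    (x : ℕ → X) (p : ℕ → ℕ) (hp : FastGrowing p)
    (hL : (omegaLimitSet x).Nontrivial)
    (y : ℤ → X) (hy : y ∈ orbitClosure (oxtoby p x)) (hT : IsToeplitz y) :
    (∃ m : ℤ, y = shiftZ m (oxtoby p x)) ↔
      ∃ f : (ℤ → X) → (ℤ → X),
        IsConjugacy (orbitClosure (oxtoby p x)) (orbitClosure (oxtoby p x)) f ∧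
        f y = revSeq y := by

  constructor
  · rintro ⟨m, hym⟩
    exact OxProof.forward_direction hp x hym
  · rintro ⟨f, hf, hfy⟩
    obtain ⟨g, hgcont, hgk⟩ := OxProof.reversor_exists hp x hy hf hfy
    obtain ⟨s, hph, hcompat⟩ := OxProof.phase_seq hp x hy
    have hc := OxProof.two_s_integral hp hL hy hph hcompat hgcont hgk
    obtain ⟨m, hm⟩ := OxProof.s_integral hp hL hT hph hcompat hc
    exact ⟨-m, OxProof.y_eq_shift hp x hph hm⟩
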